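/- Let k > 1 and let b = (b₁, …, b_k) ∈ ℤ^k satisfy gcd(b₁, …, b_k) = 1. Then b belongs to some free basis of ℤ^k, and there exists a matrix T ∈ GL_k(ℤ) such that T(b) = (1, 0, …, 0) and every entry of T has absolute value at most 2^{k−1}‖b‖₁; consequently T maps the cube [−1,1]^k into the cube [−2^{k−1}k‖b‖₁, 2^{k−1}k‖b‖₁]^k. -/

import Mathlib

open Finset

lemma gcd_univ_succ {n : ℕ} (v : Fin (n+1) → ℤ) :
    Finset.univ.gcd v = GCDMonoid.gcd (v 0) (Finset.univ.gcd (v ∘ Fin.succ)) := by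
  rw [Fin.univ_succ, Finset.cons_eq_insert, Finset.gcd_insert, Finset.map_eq_image,
    Finset.gcd_image]
  rfl

lemma bezout_sum : ∀ (k : ℕ) (w : Fin k → ℤ), ∃ y : Fin k → ℤ,
    ∑ l, y l * w l = Finset.univ.gcd w := by
  intro k
  induction k with
  | zero => intro w; exact ⟨fun _ => 0, by simp⟩
  | succ n ih =>
    intro w
    obtain ⟨y', hy'⟩ := ih (w ∘ Fin.succ)
    set G := Finset.univ.gcd (w ∘ Fin.succ) with hG
    set A := Int.gcdA (w 0) G with hA
    set B := Int.gcdB (w 0) G with hB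
    refine ⟨Fin.cons A (fun l => B * y' l), ?_⟩
    rw [gcd_univ_succ, Fin.sum_univ_succ]
    simp only [Fin.cons_zero, Fin.cons_succ]
    have hgab : (Int.gcd (w 0) G : ℤ) = w 0 * A + G * B := Int.gcd_eq_gcd_ab (w 0) G
    have hco : (GCDMonoid.gcd (w 0) G : ℤ) = ↑(Int.gcd (w 0) G) := (Int.coe_gcd _ _).symm
    have hsum : ∑ x : Fin n, B * y' x * w x.succ = G * B := by
      rw [← hy', Finset.sum_mul]
      exact Finset.sum_congr rfl fun i _ => by simp only [Function.comp_apply]; ring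
    rw [hco, hgab, hsum]
    ring

lemma bezout_small (k : ℕ) (w : Fin k → ℤ) (i : Fin k) (hwi : w i ≠ 0) (c : ℤ)
    (hc : Finset.univ.gcd w ∣ c) :
    ∃ y : Fin k → ℤ, ∑ l, y l * w l = c ∧ ∀ j, |y j| ≤ |c| + ∑ l, |w l| := by
  obtain ⟨y₁, hy₁⟩ := bezout_sum k w
  obtain ⟨d, hd⟩ := hc
  set y₂ : Fin k → ℤ := fun l => d * y₁ l with hy₂def
  have hy₂ : ∑ l, y₂ l * w l = c := by
    rw [hd, ← hy₁, Finset.sum_mul]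
    exact Finset.sum_congr rfl fun l _ => by ring
  set M : ℤ := |w i| with hMdef
  have hM : 0 < M := abs_pos.mpr hwi
  set s : ℤ := Int.sign (w i) with hsdef
  have hsM : s * M = w i := Int.sign_mul_abs (w i)
  have hss : s * s = 1 := by
    rcases hwi.lt_or_gt with h | h
    · rw [hsdef, Int.sign_eq_neg_one_of_neg h]; norm_num
    · rw [hsdef, Int.sign_eq_one_of_pos h]; norm_num
  set Q : ℤ := ∑ l ∈ Finset.univ.erase i, (y₂ l / M) * w l with hQdef
  set y : Fin k → ℤ := fun j => if j = i then y₂ i + s * Q else y₂ j % M with hydef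
  have hyi : y i = y₂ i + s * Q := by simp [hydef]
  have hyj : ∀ j, j ≠ i → y j = y₂ j % M := fun j hj => by simp [hydef, hj]
  have habs : ∀ j, j ≠ i → 0 ≤ y j ∧ y j < M := by
    intro j hj
    rw [hyj j hj]
    exact ⟨Int.emod_nonneg _ (ne_of_gt hM), Int.emod_lt_of_pos _ hM⟩
  have hsum : ∑ l, y l * w l = c := by
    rw [← Finset.sum_erase_add _ _ (Finset.mem_univ i), hyi]
    have h1 : ∑ l ∈ Finset.univ.erase i, y l * w l
        = (∑ l ∈ Finset.univ.erase i, y₂ l * w l) - M * Q := by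
      rw [hQdef, Finset.mul_sum, ← Finset.sum_sub_distrib]
      refine Finset.sum_congr rfl fun l hl => ?_
      rw [hyj l (Finset.ne_of_mem_erase hl), Int.emod_def]
      ring
    rw [h1]
    have h2 : (y₂ i + s * Q) * w i = y₂ i * w i + M * Q := by
      rw [← hsM]; linear_combination M * Q * hss
    rw [h2, ← hy₂, ← Finset.sum_erase_add _ _ (Finset.mem_univ i)]
    ring
  refine ⟨y, hsum, ?_⟩
  have hMle : M ≤ ∑ l, |w l| := by
    rw [hMdef]
    exact Finset.single_le_sum (fun l _ => abs_nonneg (w l)) (Finset.mem_univ i)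
  have hcnn : 0 ≤ |c| := abs_nonneg c
  intro j
  by_cases hj : j = i
  · subst hj
    have key : y j * w j = c - ∑ l ∈ Finset.univ.erase j, y l * w l := by
      rw [← hsum, ← Finset.sum_erase_add _ _ (Finset.mem_univ j)]; ring
    have hb : |y j| * M = |y j * w j| := by rw [abs_mul, hMdef]
    have hub : |y j * w j| ≤ M * (|c| + ∑ l ∈ Finset.univ.erase j, |w l|) := by
      rw [key]
      calc |c - ∑ l ∈ Finset.univ.erase j, y l * w l|
          ≤ |c| + |∑ l ∈ Finset.univ.erase j, y l * w l| := abs_sub c _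
        _ ≤ |c| + ∑ l ∈ Finset.univ.erase j, |y l * w l| :=
            add_le_add_right (Finset.abs_sum_le_sum_abs _ _) _
        _ ≤ |c| + ∑ l ∈ Finset.univ.erase j, M * |w l| := by
            refine add_le_add_right (Finset.sum_le_sum fun l hl => ?_) _
            rw [abs_mul]
            have := habs l (Finset.ne_of_mem_erase hl)
            have h1 : |y l| ≤ M := by
              rw [abs_of_nonneg this.1]; exact le_of_lt this.2
            exact mul_le_mul_of_nonneg_right h1 (abs_nonneg _)
        _ ≤ M * (|c| + ∑ l ∈ Finset.univ.erase j, |w l|) := by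
            rw [mul_add, Finset.mul_sum]
            have : |c| ≤ M * |c| := le_mul_of_one_le_left hcnn hM
            linarith
    have := hb ▸ hub
    have hyle : |y j| ≤ |c| + ∑ l ∈ Finset.univ.erase j, |w l| := by
      have := (mul_le_mul_iff_right₀ hM).mp (by linarith [this] : M * |y j| ≤ M * (|c| + ∑ l ∈ Finset.univ.erase j, |w l|))
      exact this
    refine hyle.trans (add_le_add_right ?_ _)
    exact Finset.sum_le_sum_of_subset_of_nonneg (Finset.subset_univ _)
      (fun l _ _ => abs_nonneg (w l))
  · obtain ⟨h0, h1⟩ := habs j hj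
    rw [abs_of_nonneg h0]
    have : y j ≤ M := le_of_lt h1
    linarith

lemma main_induction : ∀ (n : ℕ) (v : Fin (n+1) → ℤ), Finset.univ.gcd v = 1 →
    ∃ T : Matrix (Fin (n+1)) (Fin (n+1)) ℤ,
      (T.mulVec v = fun j : Fin (n+1) => if (j : ℕ) = 0 then (1:ℤ) else 0) ∧
      (∀ x : Fin (n+1) → ℤ, ∃ c, Matrix.vecMul c T = x) ∧
      (∀ i j, |T i j| ≤ 2 ^ n * ∑ l, |v l|) := by
  intro n
  induction n with
  | zero =>
    intro v hv
    have h1 : normalize (v 0) = 1 := by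
      rw [← hv]
      rw [show (Finset.univ : Finset (Fin 1)) = {0} from rfl, Finset.gcd_singleton]
    have habs : |v 0| = 1 := by rw [Int.abs_eq_normalize, h1]
    have hsq : v 0 * v 0 = 1 := by
      rcases abs_eq (by norm_num : (0:ℤ) ≤ 1) |>.mp habs with h | h <;> rw [h] <;> norm_num
    refine ⟨Matrix.of fun _ _ => v 0, ?_, ?_, ?_⟩
    · funext j
      have hj : j = 0 := Fin.fin_one_eq_zero j
      subst hj
      simp [Matrix.mulVec, dotProduct, Fin.sum_univ_one, hsq]
    · intro x
      refine ⟨fun _ => x 0 * v 0, ?_⟩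
      funext j
      have hj : j = 0 := Fin.fin_one_eq_zero j
      subst hj
      have : ∀ y : Fin (0+1) → ℤ, Matrix.vecMul y (Matrix.of fun _ _ => v 0) 0 = y 0 * v 0 := by
        intro y; simp [Matrix.vecMul, dotProduct, Fin.sum_univ_one]
      exact (this _).trans (by rw [mul_assoc, hsq, mul_one])
    · intro i j
      have hi : i = 0 := Fin.fin_one_eq_zero i
      have hj : j = 0 := Fin.fin_one_eq_zero j
      subst hi; subst hj
      simp [Fin.sum_univ_one]
  | succ n ih =>
    intro v hv
    have hrdef : ∀ i : Fin (n+1), (v ∘ Fin.succ) i = v i.succ := fun i => rfl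
    set r : Fin (n+1) → ℤ := fun i => v i.succ with hrd
    have hcomp : (v ∘ Fin.succ) = r := rfl
    set g : ℤ := Finset.univ.gcd r with hgdef
    have hvg : Finset.univ.gcd v = GCDMonoid.gcd (v 0) g := by
      rw [gcd_univ_succ v, hcomp]
    have hvne : ∃ l, v l ≠ 0 := by
      by_contra h
      push_neg at h
      rw [Finset.gcd_eq_zero_iff.mpr (fun l _ => h l)] at hv
      exact absurd hv (by norm_num)
    have hSv1 : (1:ℤ) ≤ ∑ l, |v l| := by
      obtain ⟨l, hl⟩ := hvne
      calc (1:ℤ) ≤ |v l| := Int.one_le_abs hl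
        _ ≤ ∑ l, |v l| := Finset.single_le_sum (fun m _ => abs_nonneg (v m)) (Finset.mem_univ l)
    have hSv0 : (0:ℤ) ≤ ∑ l, |v l| := le_trans (by norm_num) hSv1
    have hpow2 : (2:ℤ) ≤ 2 ^ (n+1) := by
      calc (2:ℤ) = 2 ^ 1 := (pow_one 2).symm
        _ ≤ 2 ^ (n+1) := pow_le_pow_right₀ (by norm_num) (by omega)
    by_cases hg0 : g = 0
    · -- tail is all zero, v 0 = ±1
      have hrz : ∀ i, r i = 0 := by
        intro i
        exact Finset.gcd_eq_zero_iff.mp hg0 i (Finset.mem_univ i)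
      have h1 : normalize (v 0) = 1 := by
        rw [hvg, hg0, gcd_zero_right] at hv
        exact hv
      have habs : |v 0| = 1 := by rw [Int.abs_eq_normalize, h1]
      have hsq : v 0 * v 0 = 1 := by
        rcases abs_eq (by norm_num : (0:ℤ) ≤ 1) |>.mp habs with h | h <;> rw [h] <;> norm_num
      set d : Fin (n+2) → ℤ := fun i => if (i:ℕ) = 0 then v 0 else 1 with hddef
      have hdsq : ∀ i, d i * d i = 1 := by
        intro i
        by_cases h : i = 0 <;> simp [hddef, h, hsq]
      refine ⟨Matrix.diagonal d, ?_, ?_, ?_⟩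
      · funext j
        rw [Matrix.mulVec_diagonal]
        cases j using Fin.cases with
        | zero => simpa [hddef] using hsq
        | succ i =>
          have : v i.succ = 0 := hrz i
          simp [hddef, this, Fin.val_succ]
      · intro x
        refine ⟨fun j => d j * x j, ?_⟩
        funext j
        rw [Matrix.vecMul_diagonal]
        linear_combination x j * hdsq j
      · intro i j
        have h1 : |Matrix.diagonal d i j| ≤ 1 := by
          by_cases h : i = j
          · subst h
            rw [Matrix.diagonal_apply_eq]
            by_cases h : i = 0 <;> simp [hddef, h, habs]
          · rw [Matrix.diagonal_apply_ne _ h]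
            norm_num
        calc |Matrix.diagonal d i j| ≤ 1 := h1
          _ ≤ 2 ^ (n+1) * 1 := by rw [mul_one]; linarith [hpow2]
          _ ≤ 2 ^ (n+1) * ∑ l, |v l| := by
              apply mul_le_mul_of_nonneg_left hSv1 (by positivity)
    · -- main case
      have hgnn : 0 ≤ g := by
        have hn : normalize g = g := Finset.normalize_gcd
        rw [← hn, ← Int.abs_eq_normalize]
        exact abs_nonneg g
      have hgpos : 0 < g := lt_of_le_of_ne hgnn (Ne.symm hg0)
      have hg1 : 1 ≤ g := hgpos
      have hdvd : ∀ i, g ∣ r i := fun i => Finset.gcd_dvd (Finset.mem_univ i)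
      have hex : ∃ i, r i ≠ 0 := by
        by_contra h
        push_neg at h
        exact hg0 (Finset.gcd_eq_zero_iff.mpr fun i _ => h i)
      obtain ⟨i₀, hi₀⟩ := hex
      set w : Fin (n+1) → ℤ := fun i => r i / g with hwdef
      have hwr : ∀ i, w i * g = r i := fun i => Int.ediv_mul_cancel (hdvd i)
      have hw1 : Finset.univ.gcd w = 1 := Finset.gcd_div_eq_one (Finset.mem_univ i₀) hi₀
      have hmul : ∀ (q : ℤ) (i : Fin (n+1)), q * v i.succ = q * w i * g := by
        intro q i
        have hh : q * (w i * g) = q * w i * g := by ring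
        rw [hwr i] at hh
        exact hh
      obtain ⟨S, hS1, hS2, hS3⟩ := ih w hw1
      have hco : IsCoprime g (v 0) := by
        have h0 : GCDMonoid.gcd (v 0) g = 1 := by rw [← hvg]; exact hv
        have h2 : Int.gcd (v 0) g = 1 := by
          have h3 : ((Int.gcd (v 0) g : ℤ)) = 1 := by rw [Int.coe_gcd]; exact h0
          exact_mod_cast h3
        exact (Int.isCoprime_iff_gcd_eq_one.mpr h2).symm
      have hone : Finset.univ.gcd v ∣ 1 := by rw [hv]
      have hvi₀ : v i₀.succ ≠ 0 := hi₀
      obtain ⟨a, ha1, ha2⟩ := bezout_small (n+2) v i₀.succ hvi₀ 1 hone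
      have hwi₀ : w i₀ ≠ 0 := fun h => hi₀ (by rw [← hwr i₀, h, zero_mul])
      obtain ⟨y, hy1, hy2⟩ := bezout_small (n+1) w i₀ hwi₀ (v 0) (by rw [hw1]; exact one_dvd _)
      set zrow : Fin (n+2) → ℤ := Fin.cons (-g) y with hzdef
      set T : Matrix (Fin (n+2)) (Fin (n+2)) ℤ :=
        Matrix.of (Fin.cons a (Fin.cons zrow (fun i' : Fin n => Fin.cons 0 (S i'.succ)))) with hTdef
      have hT0 : ∀ j, T 0 j = a j := fun j => by simp [hTdef]
      have hT1 : ∀ j, T (0 : Fin (n+1)).succ j = zrow j := fun j => by simp [hTdef]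
      have hT2 : ∀ (i' : Fin n) j, T (i'.succ).succ j = (Fin.cons 0 (S i'.succ) : Fin (n+2) → ℤ) j :=
        fun i' j => by simp [hTdef]
      have hmv : ∀ i, (T.mulVec v) i = ∑ l, T i l * v l := by
        intro i
        simp [Matrix.mulVec, dotProduct]
      refine ⟨T, ?_, ?_, ?_⟩
      · funext j
        rw [hmv]
        cases j using Fin.cases with
        | zero => simpa [hT0] using ha1
        | succ i =>
          have htarget : (if ((i.succ : Fin (n+2)) : ℕ) = 0 then (1:ℤ) else 0) = 0 := by
            simp [Fin.val_succ]
          rw [htarget]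
          cases i using Fin.cases with
          | zero =>
            rw [Fin.sum_univ_succ]
            have hz0 : zrow 0 = -g := by simp [hzdef]
            have hzs : ∀ i : Fin (n+1), zrow i.succ = y i := fun i => by simp [hzdef]
            simp only [hT1, hz0, hzs]
            have h4 : ∑ i : Fin (n+1), y i * v i.succ = (∑ i, y i * w i) * g := by
              rw [Finset.sum_mul]
              exact Finset.sum_congr rfl fun i _ => hmul (y i) i
            rw [h4, hy1]
            ring
          | succ i' =>
            rw [Fin.sum_univ_succ]
            simp only [hT2, Fin.cons_zero, Fin.cons_succ]
            have h4 : ∑ i : Fin (n+1), S i'.succ i * v i.succ = (∑ i, S i'.succ i * w i) * g := by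
              rw [Finset.sum_mul]
              exact Finset.sum_congr rfl fun i _ => hmul (S i'.succ i) i
            have h5 : ∑ i : Fin (n+1), S i'.succ i * w i = (S.mulVec w) i'.succ := by
              simp [Matrix.mulVec, dotProduct]
            have h6 : (S.mulVec w) i'.succ = 0 := by
              rw [hS1]
              simp [Fin.val_succ]
            rw [h4, h5, h6]
            ring
      · intro x
        set sc : ℤ := ∑ l, x l * v l with hscdef
        set x' : Fin (n+2) → ℤ := fun l => x l - sc * a l with hx'def
        have hx'v : ∑ l, x' l * v l = 0 := by
          have h7 : ∑ l, x' l * v l = (∑ l, x l * v l) - sc * ∑ l, a l * v l := by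
            rw [Finset.mul_sum, ← Finset.sum_sub_distrib]
            exact Finset.sum_congr rfl fun l _ => by simp [hx'def]; ring
          rw [h7, ha1, mul_one, ← hscdef, sub_self]
        have hsplit : x' 0 * v 0 + ∑ i : Fin (n+1), x' i.succ * v i.succ = 0 := by
          rw [← Fin.sum_univ_succ (f := fun l => x' l * v l)]
          exact hx'v
        have hdl : g ∣ ∑ i : Fin (n+1), x' i.succ * v i.succ :=
          Finset.dvd_sum fun i _ => Dvd.dvd.mul_left (hdvd i) _
        have hdvd0 : g ∣ x' 0 := by
          have h8 : g ∣ x' 0 * v 0 := by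
            have h9 : x' 0 * v 0 = -∑ i : Fin (n+1), x' i.succ * v i.succ := by linarith
            rw [h9]
            exact dvd_neg.mpr hdl
          exact hco.dvd_of_dvd_mul_right h8
        set u : ℤ := x' 0 / g with hudef
        have hu : g * u = x' 0 := Int.mul_ediv_cancel' hdvd0
        set z' : Fin (n+1) → ℤ := fun i => x' i.succ + u * y i with hz'def
        have hsw : (∑ i : Fin (n+1), x' i.succ * w i) = -u * v 0 := by
          have h10 : (∑ i : Fin (n+1), x' i.succ * w i) * g = ∑ i : Fin (n+1), x' i.succ * v i.succ := by
            rw [Finset.sum_mul]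
            exact Finset.sum_congr rfl fun i _ => (hmul (x' i.succ) i).symm
          have h11 : (∑ i : Fin (n+1), x' i.succ * w i) * g = (-u * v 0) * g := by
            rw [h10]
            linear_combination hsplit + v 0 * hu
          exact mul_right_cancel₀ hg0 h11
        have hz'w : ∑ i, z' i * w i = 0 := by
          have h13 : ∑ i, z' i * w i
              = (∑ i : Fin (n+1), x' i.succ * w i) + u * ∑ i, y i * w i := by
            rw [Finset.mul_sum, ← Finset.sum_add_distrib]
            exact Finset.sum_congr rfl fun i _ => by simp [hz'def]; ring
          rw [h13, hsw, hy1]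
          ring
        obtain ⟨c', hc'⟩ := hS2 z'
        have hvm : ∀ j, (Matrix.vecMul c' S) j = ∑ i, c' i * S i j := by
          intro j
          simp [Matrix.vecMul, dotProduct]
        have hc'0 : c' 0 = 0 := by
          have h14 : ∑ j, z' j * w j = ∑ i, c' i * (S.mulVec w) i := by
            calc ∑ j, z' j * w j = ∑ j, (∑ i, c' i * S i j) * w j := by
                  refine Finset.sum_congr rfl fun j _ => ?_
                  rw [← hvm j, hc']
              _ = ∑ j, ∑ i, c' i * S i j * w j := by
                  refine Finset.sum_congr rfl fun j _ => ?_
                  rw [Finset.sum_mul]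
              _ = ∑ i, ∑ j, c' i * S i j * w j := Finset.sum_comm
              _ = ∑ i, c' i * (S.mulVec w) i := by
                  refine Finset.sum_congr rfl fun i _ => ?_
                  simp [Matrix.mulVec, dotProduct, Finset.mul_sum, mul_assoc]
          have h15 : ∑ i, c' i * (S.mulVec w) i = c' 0 := by
            rw [hS1, Fin.sum_univ_succ]
            simp [Fin.val_succ]
          rw [hz'w] at h14
          rw [h15] at h14
          exact h14.symm
        refine ⟨Fin.cons sc (Fin.cons (-u) (fun i' : Fin n => c' i'.succ)), ?_⟩
        funext j
        have hvmT : (Matrix.vecMul (Fin.cons sc (Fin.cons (-u) (fun i' : Fin n => c' i'.succ))) T) j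
            = ∑ i, (Fin.cons sc (Fin.cons (-u) (fun i' : Fin n => c' i'.succ)) : Fin (n+2) → ℤ) i * T i j := by
          simp [Matrix.vecMul, dotProduct]
        rw [hvmT, Fin.sum_univ_succ, Fin.sum_univ_succ]
        simp only [Fin.cons_zero, Fin.cons_succ]
        have hSsum : ∀ j' : Fin (n+1), ∑ i' : Fin n, c' i'.succ * S i'.succ j' = z' j' := by
          intro j'
          have h16 : z' j' = ∑ i, c' i * S i j' := by rw [← hvm j', hc']
          rw [h16, Fin.sum_univ_succ, hc'0, zero_mul, zero_add]
        cases j using Fin.cases with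
        | zero =>
          have hz0 : zrow 0 = -g := by simp [hzdef]
          have hcol0 : ∀ i' : Fin n, (Fin.cons 0 (S i'.succ) : Fin (n+2) → ℤ) 0 = 0 :=
            fun i' => by simp
          simp only [hT0, hT1, hT2, hz0, hcol0, mul_zero, Finset.sum_const_zero, add_zero]
          have : x 0 = x' 0 + sc * a 0 := by simp [hx'def]
          rw [this, ← hu]
          ring
        | succ j' =>
          have hzs : zrow j'.succ = y j' := by simp [hzdef]
          have hcols : ∀ i' : Fin n, (Fin.cons 0 (S i'.succ) : Fin (n+2) → ℤ) j'.succ = S i'.succ j' :=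
            fun i' => by simp
          simp only [hT0, hT1, hT2, hzs, hcols]
          rw [hSsum j']
          have : x j'.succ = x' j'.succ + sc * a j'.succ := by simp [hx'def]
          rw [this, hz'def]
          ring
      · intro i j
        have hSr : ∑ i : Fin (n+1), |r i| ≤ ∑ l, |v l| := by
          have h17 : ∑ l : Fin (n+2), |v l| = |v 0| + ∑ i : Fin (n+1), |v i.succ| :=
            Fin.sum_univ_succ _
          have h18 : ∑ i : Fin (n+1), |r i| = ∑ i : Fin (n+1), |v i.succ| := rfl
          have h19 := abs_nonneg (v 0)
          linarith
        have hSw : ∑ i, |w i| ≤ ∑ i : Fin (n+1), |r i| := by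
          refine Finset.sum_le_sum fun i _ => ?_
          calc |w i| = |w i| * 1 := (mul_one _).symm
            _ ≤ |w i| * g := mul_le_mul_of_nonneg_left hg1 (abs_nonneg _)
            _ = |w i * g| := by rw [abs_mul, abs_of_pos hgpos]
            _ = |r i| := by rw [hwr i]
        have hgle : g ≤ ∑ l, |v l| := by
          have h18 : g ≤ |r i₀| := Int.le_of_dvd (abs_pos.mpr hi₀) ((dvd_abs _ _).mpr (hdvd i₀))
          calc g ≤ |r i₀| := h18
            _ ≤ ∑ i : Fin (n+1), |r i| :=
                Finset.single_le_sum (fun m _ => abs_nonneg (r m)) (Finset.mem_univ i₀)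
            _ ≤ ∑ l, |v l| := hSr
        have hbig : 2 * ∑ l, |v l| ≤ 2 ^ (n+1) * ∑ l, |v l| :=
          mul_le_mul_of_nonneg_right hpow2 hSv0
        cases i using Fin.cases with
        | zero =>
          rw [hT0]
          calc |a j| ≤ |(1:ℤ)| + ∑ l, |v l| := ha2 j
            _ = 1 + ∑ l, |v l| := by norm_num
            _ ≤ 2 * ∑ l, |v l| := by linarith
            _ ≤ 2 ^ (n+1) * ∑ l, |v l| := hbig
        | succ i =>
          cases i using Fin.cases with
          | zero =>
            rw [hT1]
            cases j using Fin.cases with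
            | zero =>
              have hz0 : zrow 0 = -g := by simp [hzdef]
              rw [hz0, abs_neg, abs_of_pos hgpos]
              calc g ≤ ∑ l, |v l| := hgle
                _ ≤ 2 ^ (n+1) * ∑ l, |v l| := by nlinarith
            | succ j' =>
              have hzs : zrow j'.succ = y j' := by simp [hzdef]
              rw [hzs]
              calc |y j'| ≤ |v 0| + ∑ i, |w i| := hy2 j'
                _ ≤ |v 0| + ∑ i : Fin (n+1), |r i| := by linarith
                _ = ∑ l, |v l| := (Fin.sum_univ_succ (f := fun l : Fin (n+2) => |v l|)).symm
                _ ≤ 2 ^ (n+1) * ∑ l, |v l| := by nlinarith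
          | succ i' =>
            rw [hT2]
            cases j using Fin.cases with
            | zero =>
              have : (Fin.cons 0 (S i'.succ) : Fin (n+2) → ℤ) 0 = 0 := by simp
              rw [this]
              simp only [abs_zero]
              positivity
            | succ j' =>
              have : (Fin.cons 0 (S i'.succ) : Fin (n+2) → ℤ) j'.succ = S i'.succ j' := by simp
              rw [this]
              calc |S i'.succ j'| ≤ 2 ^ n * ∑ i, |w i| := hS3 i'.succ j'
                _ ≤ 2 ^ n * ∑ l, |v l| := by
                    apply mul_le_mul_of_nonneg_left (le_trans hSw hSr) (by positivity)
                _ ≤ 2 ^ (n+1) * ∑ l, |v l| := by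
                    apply mul_le_mul_of_nonneg_right _ hSv0
                    apply pow_le_pow_right₀ (by norm_num) (by omega)

/-- a vector `b ∈ ℤ^k` (`k > 1`) with coprime entries belongs to a
free basis of `ℤ^k`, and there is `T ∈ GL_k(ℤ)` with `T b = e₁`, all entries of
`T` bounded by `2^(k-1) ‖b‖₁`, and consequently `T` maps the cube `[-1,1]^k`
into the cube `[-2^(k-1) k ‖b‖₁, 2^(k-1) k ‖b‖₁]^k`. -/
theorem coprime_vector_in_basis_and_GL (k : ℕ) (hk : 1 < k) (b : Fin k → ℤ)
    (hb : Finset.univ.gcd b = 1) :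
    (∃ (v : Module.Basis (Fin k) ℤ (Fin k → ℤ)) (i : Fin k), v i = b) ∧
    ∃ T : Matrix (Fin k) (Fin k) ℤ, IsUnit T.det ∧
      T.mulVec b = (fun j : Fin k => if (j : ℕ) = 0 then 1 else 0) ∧
      (∀ i j : Fin k, |T i j| ≤ 2 ^ (k - 1) * ∑ l, |b l|) ∧
      (∀ v : Fin k → ℝ, (∀ i, |v i| ≤ 1) →
        ∀ i, |((T.map (Int.cast : ℤ → ℝ)).mulVec v) i| ≤
          2 ^ (k - 1) * (k : ℝ) * ∑ l, (|b l| : ℝ)) := by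
  obtain ⟨m, rfl⟩ : ∃ m, k = m + 1 := ⟨k - 1, by omega⟩
  obtain ⟨T, hT1, hT2, hT3⟩ := main_induction m b hb
  have hm1 : m + 1 - 1 = m := rfl
  -- right inverse matrix
  have hBex : ∀ j : Fin (m+1), ∃ c, Matrix.vecMul c T = Pi.single j 1 := fun j => hT2 _
  choose B hB using hBex
  have hBT : Matrix.of B * T = 1 := by
    ext j l
    have h1 : (Matrix.of B * T) j l = Matrix.vecMul (B j) T l := by
      simp [Matrix.mul_apply, Matrix.vecMul, dotProduct]
    rw [h1, hB j, Matrix.one_apply, Pi.single_apply]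
    exact if_congr eq_comm rfl rfl
  have hdet : IsUnit T.det := by
    refine IsUnit.of_mul_eq_one (Matrix.of B).det ?_
    rw [mul_comm, ← Matrix.det_mul, hBT, Matrix.det_one]
  have hsingle : (fun j : Fin (m+1) => if (j : ℕ) = 0 then (1:ℤ) else 0) = Pi.single 0 1 := by
    funext j
    rw [Pi.single_apply]
    refine if_congr ?_ rfl rfl
    exact ⟨fun h => Fin.ext h, fun h => by rw [h]; rfl⟩
  constructor
  · have hinv : Invertible T := T.invertibleOfIsUnitDet hdet
    set e := T.toLinearEquiv' hinv with hedef
    refine ⟨(Pi.basisFun ℤ (Fin (m+1))).map e.symm, 0, ?_⟩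
    rw [Module.Basis.map_apply]
    have hb0 : (Pi.basisFun ℤ (Fin (m+1))) 0 = Pi.single 0 1 := by
      simp [Pi.basisFun_apply]
    rw [hb0]
    have heb : e b = Pi.single 0 1 := by
      have h2 : e b = T.mulVec b := by
        show Matrix.toLin' T b = T.mulVec b
        exact Matrix.toLin'_apply T b
      rw [h2, hT1, hsingle]
    rw [← heb, LinearEquiv.symm_apply_apply]
  · refine ⟨T, hdet, hT1, fun i j => hT3 i j, ?_⟩
    intro vr hvr i
    have h1 : ((T.map (Int.cast : ℤ → ℝ)).mulVec vr) i = ∑ j, (T i j : ℝ) * vr j := by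
      simp [Matrix.mulVec, dotProduct, Matrix.map_apply]
    rw [h1]
    have hcast : ∀ i j : Fin (m+1), |(T i j : ℝ)| ≤ 2 ^ m * ∑ l, (|b l| : ℝ) := by
      intro i j
      have h2 := hT3 i j
      have h3 : ((|T i j| : ℤ) : ℝ) ≤ ((2 ^ m * ∑ l, |b l| : ℤ) : ℝ) := Int.cast_le.mpr h2
      calc |(T i j : ℝ)| = ((|T i j| : ℤ) : ℝ) := (Int.cast_abs).symm
        _ ≤ ((2 ^ m * ∑ l, |b l| : ℤ) : ℝ) := h3
        _ = 2 ^ m * ∑ l, (|b l| : ℝ) := by push_cast; ring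
    calc |∑ j, (T i j : ℝ) * vr j| ≤ ∑ j, |(T i j : ℝ) * vr j| :=
          Finset.abs_sum_le_sum_abs _ _
      _ ≤ ∑ _j : Fin (m+1), (2 ^ m * ∑ l, (|b l| : ℝ)) := by
          refine Finset.sum_le_sum fun j _ => ?_
          rw [abs_mul]
          calc |(T i j : ℝ)| * |vr j| ≤ |(T i j : ℝ)| * 1 :=
                mul_le_mul_of_nonneg_left (hvr j) (abs_nonneg _)
            _ = |(T i j : ℝ)| := mul_one _
            _ ≤ 2 ^ m * ∑ l, (|b l| : ℝ) := hcast i j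
      _ = ((m+1 : ℕ) : ℝ) * (2 ^ m * ∑ l, (|b l| : ℝ)) := by
          rw [Finset.sum_const, Finset.card_univ, Fintype.card_fin, nsmul_eq_mul]
      _ = 2 ^ (m + 1 - 1) * ((m+1 : ℕ) : ℝ) * ∑ l, (|b l| : ℝ) := by
          rw [hm1]; ring
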